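/- arXiv:1805.09793 — 3 statements merged into one kernel-verified Lean document; each statement's English description precedes it below -/
import Mathlib

section
/- Let X be a binomial random variable with parameters n and p, i.e., X ~ Bin(n, p). Then for any real number k with n·p < k < n, we have P(X ≥ k) ≤ exp(−n·D(k/n ‖ p)), where D(a ‖ b) denotes the Kullback–Leibler divergence between Bernoulli distributions with parameters a and b. -/
open Real Finset

/-- The Kullback–Leibler divergence between Bernoulli distributions with parameters `a` and `b`. -/
noncomputable def bernoulliKL (a b : ℝ) : ℝ :=
  a * Real.log (a / b) + (1 - a) * Real.log ((1 - a) / (1 - b))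

/-- The probability mass function of the binomial distribution `Bin(n, p)` at `i`. -/
noncomputable def binomialPMF (n : ℕ) (p : ℝ) (i : ℕ) : ℝ :=
  (n.choose i : ℝ) * p ^ i * (1 - p) ^ (n - i)

/-- **Binomial tail bound.** If `X ~ Bin(n, p)` then for any real `k` with `n·p < k < n`,
`P(X ≥ k) ≤ exp(−n·D(k/n ‖ p))`. -/
theorem binomial_tail_bound (n : ℕ) (p : ℝ) (hp : 0 < p) (hp1 : p < 1)
    (k : ℝ) (hk1 : (n : ℝ) * p < k) (hk2 : k < n) :
    ∑ i ∈ Finset.range (n + 1), (if k ≤ (i : ℝ) then binomialPMF n p i else 0)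
      ≤ Real.exp (-(n : ℝ) * bernoulliKL (k / n) p) := by
  have hn : (0:ℝ) < n := by nlinarith
  set a : ℝ := k / n with ha
  have hka : k = n * a := by rw [ha]; field_simp
  have hpa : p < a := by rw [ha]; rw [lt_div_iff₀ hn]; linarith
  have ha0 : 0 < a := lt_trans hp hpa
  have ha1 : a < 1 := by rw [ha]; rw [div_lt_one hn]; exact hk2
  have h1a : 0 < 1 - a := by linarith
  have h1p : 0 < 1 - p := by linarith
  set r : ℝ := a * (1 - p) / ((1 - a) * p) with hr
  have hr1 : 1 < r := by
    rw [hr, lt_div_iff₀ (by positivity)]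
    nlinarith
  have hr0 : 0 < r := lt_trans one_pos hr1
  -- binomial identity
  have hpr : p * r + (1 - p) = (1 - p) / (1 - a) := by
    rw [hr]; field_simp; ring
  have hsum : ∑ i ∈ Finset.range (n + 1), binomialPMF n p i * r ^ i
      = ((1 - p) / (1 - a)) ^ n := by
    rw [← hpr, add_pow]
    refine Finset.sum_congr rfl fun i hi => ?_
    rw [binomialPMF, mul_pow]
    ring
  -- termwise bound
  have hterm : ∀ i ∈ Finset.range (n + 1),
      (if k ≤ (i : ℝ) then binomialPMF n p i else 0)
        ≤ binomialPMF n p i * r ^ i * r ^ (-k) := by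
    intro i _
    have hpmf : 0 ≤ binomialPMF n p i := by
      rw [binomialPMF]; positivity
    by_cases h : k ≤ (i : ℝ)
    · simp only [h, if_true]
      have : (1:ℝ) ≤ r ^ i * r ^ (-k) := by
        rw [← Real.rpow_natCast r i, ← Real.rpow_add hr0]
        apply Real.one_le_rpow hr1.le (by linarith)
      nlinarith [mul_le_mul_of_nonneg_left this hpmf]
    · simp only [h, if_false]
      positivity
  calc ∑ i ∈ Finset.range (n + 1), (if k ≤ (i : ℝ) then binomialPMF n p i else 0)
      ≤ ∑ i ∈ Finset.range (n + 1), binomialPMF n p i * r ^ i * r ^ (-k) :=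
        Finset.sum_le_sum hterm
    _ = (∑ i ∈ Finset.range (n + 1), binomialPMF n p i * r ^ i) * r ^ (-k) := by
        rw [Finset.sum_mul]
    _ = ((1 - p) / (1 - a)) ^ n * r ^ (-k) := by rw [hsum]
    _ = Real.exp (-(n : ℝ) * bernoulliKL a p) := by
        rw [Real.rpow_def_of_pos hr0,
          ← Real.exp_log (show (0:ℝ) < (1 - p) / (1 - a) by positivity),
          ← Real.exp_nat_mul, ← Real.exp_add]
        congr 1
        have hlr : Real.log r = Real.log a - Real.log p
            + (Real.log (1 - p) - Real.log (1 - a)) := by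
          rw [hr, Real.log_div (by positivity) (by positivity),
            Real.log_mul ha0.ne' h1p.ne', Real.log_mul h1a.ne' hp.ne']
          ring
        rw [bernoulliKL, Real.log_div ha0.ne' hp.ne', Real.log_div h1a.ne' h1p.ne',
          Real.log_div h1p.ne' h1a.ne', hlr, hka]
        ring
end

section
/- Let m ≥ 15 be an integer and let Z be a binomial random variable with parameters m+2 and 1/(m+2), i.e., Z ~ Bin(m+2, 1/(m+2)). Then P(Z ≥ (m+2)/4) < exp(−(m+2)·log(m+2)/20), and consequently P(Z ≥ (m+2)/4) < exp(−m·log(m)/20). -/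
open Real Finset

private lemma fact6 (k : ℕ) (hk : 5 ≤ k) : ∀ j, k.factorial * 6 ^ j ≤ (k + j).factorial := by
  intro j
  induction j with
  | zero => simp
  | succ j ih =>
    have h1 : k.factorial * 6 ^ (j + 1) = (k.factorial * 6 ^ j) * 6 := by ring
    have h2 : (k + (j + 1)).factorial = (k + j + 1) * (k + j).factorial := by
      rw [show k + (j + 1) = (k + j) + 1 by ring, Nat.factorial_succ]
    rw [h1, h2]
    calc k.factorial * 6 ^ j * 6 ≤ (k + j).factorial * 6 := by
          exact Nat.mul_le_mul_right 6 ih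
      _ ≤ (k + j).factorial * (k + j + 1) := by
          apply Nat.mul_le_mul_left; omega
      _ = (k + j + 1) * (k + j).factorial := by ring

private lemma expbound (k : ℕ) (hk : 5 ≤ k) :
    Real.exp ((4 * k : ℝ) * Real.log (4 * k) / 20) < 5 / 6 * k.factorial := by
  induction k, hk using Nat.le_induction with
  | base =>
    have h20 : (4 * (5 : ℕ) : ℝ) = 20 := by norm_num
    rw [h20, show (20 : ℝ) * Real.log 20 / 20 = Real.log 20 by ring,
      Real.exp_log (by norm_num)]
    norm_num [Nat.factorial]
  | succ k hk5 ih =>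
    set a : ℝ := (k : ℝ) with ha
    have ha5 : (5 : ℝ) ≤ a := by rw [ha]; exact_mod_cast hk5
    have hapos : (0 : ℝ) < a := by linarith
    have hL' : Real.log (4 * (a + 1)) = Real.log 4 + Real.log (a + 1) :=
      Real.log_mul (by norm_num) (by linarith)
    have hdiff : Real.log (4 * (a + 1)) - Real.log (4 * a)
        = Real.log ((4 * (a + 1)) / (4 * a)) := by
      rw [Real.log_div (by positivity) (by positivity)]
    have hsub : Real.log ((4 * (a + 1)) / (4 * a)) ≤ (4 * (a + 1)) / (4 * a) - 1 :=
      Real.log_le_sub_one_of_pos (by positivity)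
    have hfr : (4 * (a + 1)) / (4 * a) - 1 = 1 / a := by
      field_simp
      ring
    have hd : a * (Real.log (4 * (a + 1)) - Real.log (4 * a)) ≤ 1 := by
      have h1 : Real.log (4 * (a + 1)) - Real.log (4 * a) ≤ 1 / a := by
        rw [hdiff]; linarith [hsub, hfr.le]
      calc a * (Real.log (4 * (a + 1)) - Real.log (4 * a)) ≤ a * (1 / a) := by
            exact mul_le_mul_of_nonneg_left h1 hapos.le
        _ = 1 := by field_simp
    have hlog4 : Real.log 4 = 2 * Real.log 2 := by
      rw [show (4 : ℝ) = 2 ^ 2 by norm_num, Real.log_pow]; push_cast; ring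
    have hlog1 : Real.log 4 ≤ Real.log (a + 1) := by
      apply Real.log_le_log (by norm_num); linarith
    have h2 := Real.log_two_gt_d9
    have h2' := Real.log_two_lt_d9
    have key : (4 * (a + 1)) * Real.log (4 * (a + 1)) / 20
        ≤ (4 * a) * Real.log (4 * a) / 20 + Real.log (a + 1) := by
      have e1 : (a + 1) * Real.log (4 * (a + 1)) - a * Real.log (4 * a)
          = a * (Real.log (4 * (a + 1)) - Real.log (4 * a)) + Real.log (4 * (a + 1)) := by
        ring
      have e2 : (a + 1) * Real.log (4 * (a + 1)) - a * Real.log (4 * a)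
          ≤ 1 + Real.log 4 + Real.log (a + 1) := by
        rw [e1]; linarith [hd, hL']
      have e3 : 1 + Real.log 4 ≤ 4 * Real.log (a + 1) := by
        rw [hlog4]; nlinarith [hlog1, hlog4]
      linarith
    have hfp : (0 : ℝ) < a + 1 := by linarith
    push_cast
    calc Real.exp ((4 * ((k : ℝ) + 1)) * Real.log (4 * ((k : ℝ) + 1)) / 20)
        ≤ Real.exp ((4 * a) * Real.log (4 * a) / 20 + Real.log (a + 1)) := by
          apply Real.exp_le_exp.mpr
          push_cast
          exact key
      _ = Real.exp ((4 * a) * Real.log (4 * a) / 20) * (a + 1) := by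
          rw [Real.exp_add, Real.exp_log hfp]
      _ < 5 / 6 * k.factorial * (a + 1) := by
          exact mul_lt_mul_of_pos_right ih hfp
      _ = 5 / 6 * (k + 1).factorial := by
          rw [Nat.factorial_succ]; push_cast; ring

/-- If `m ≥ 15` and `Z ~ Bin(m+2, 1/(m+2))`, then
`P(Z ≥ (m+2)/4) < exp(−(m+2)·log(m+2)/20)` and consequently
`P(Z ≥ (m+2)/4) < exp(−m·log(m)/20)`. -/
theorem binomial_bootstrap_tail (m : ℕ) (hm : 15 ≤ m) :
    (∑ i ∈ Finset.range (m + 3),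
        (if ((m : ℝ) + 2) / 4 ≤ (i : ℝ) then binomialPMF (m + 2) (1 / ((m : ℝ) + 2)) i else 0))
      < Real.exp (-(((m : ℝ) + 2) * Real.log ((m : ℝ) + 2)) / 20) ∧
    (∑ i ∈ Finset.range (m + 3),
        (if ((m : ℝ) + 2) / 4 ≤ (i : ℝ) then binomialPMF (m + 2) (1 / ((m : ℝ) + 2)) i else 0))
      < Real.exp (-((m : ℝ) * Real.log (m : ℝ)) / 20) := by
  set k : ℕ := (m + 5) / 4 with hkdef
  have hk5 : 5 ≤ k := by omega
  have hn4k : m + 2 ≤ 4 * k := by omega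
  have hkle : k ≤ m + 2 := by omega
  have hm15 : (15 : ℝ) ≤ (m : ℝ) := by exact_mod_cast hm
  have hkfacpos : (0 : ℝ) < (k.factorial : ℝ) := by exact_mod_cast k.factorial_pos
  -- bound the sum
  have hS : (∑ i ∈ Finset.range (m + 3),
        (if ((m : ℝ) + 2) / 4 ≤ (i : ℝ) then binomialPMF (m + 2) (1 / ((m : ℝ) + 2)) i else 0))
      ≤ 1 / (k.factorial : ℝ) * (6 / 5) := by
    have step1 : (∑ i ∈ Finset.range (m + 3),
          (if ((m : ℝ) + 2) / 4 ≤ (i : ℝ) then binomialPMF (m + 2) (1 / ((m : ℝ) + 2)) i else 0))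
        ≤ ∑ i ∈ Finset.range (m + 3),
            (if k ≤ i then 1 / (k.factorial : ℝ) * (1 / 6) ^ (i - k) else 0) := by
      apply Finset.sum_le_sum
      intro i _
      by_cases hcond : ((m : ℝ) + 2) / 4 ≤ (i : ℝ)
      · have hki : k ≤ i := by
          have h4i : (m : ℝ) + 2 ≤ 4 * (i : ℝ) := by linarith
          have : (m + 2 : ℕ) ≤ 4 * i := by exact_mod_cast h4i
          omega
        rw [if_pos hcond, if_pos hki]
        -- pmf ≤ 1/i!
        have hnpos : (0 : ℝ) < (m : ℝ) + 2 := by linarith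
        have hp0 : (0 : ℝ) ≤ 1 / ((m : ℝ) + 2) := by positivity
        have hp1 : 1 / ((m : ℝ) + 2) ≤ 1 := by
          rw [div_le_one hnpos]; linarith
        have hq0 : (0 : ℝ) ≤ 1 - 1 / ((m : ℝ) + 2) := by linarith
        have hq1 : 1 - 1 / ((m : ℝ) + 2) ≤ 1 := by linarith
        have hpmf : binomialPMF (m + 2) (1 / ((m : ℝ) + 2)) i ≤ 1 / (i.factorial : ℝ) := by
          unfold binomialPMF
          have hch : ((m + 2).choose i : ℝ) ≤ ((m + 2 : ℕ) : ℝ) ^ i / (i.factorial : ℝ) :=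
            Nat.choose_le_pow_div i (m + 2)
          have hifacpos : (0 : ℝ) < (i.factorial : ℝ) := by exact_mod_cast i.factorial_pos
          have hpowle : (1 - 1 / ((m : ℝ) + 2)) ^ (m + 2 - i) ≤ 1 :=
            pow_le_one₀ hq0 hq1
          have hpownn : (0 : ℝ) ≤ (1 - 1 / ((m : ℝ) + 2)) ^ (m + 2 - i) := pow_nonneg hq0 _
          have hmain : ((m + 2).choose i : ℝ) * (1 / ((m : ℝ) + 2)) ^ i
              ≤ 1 / (i.factorial : ℝ) := by
            have h1 : ((m + 2).choose i : ℝ) * (1 / ((m : ℝ) + 2)) ^ i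
                ≤ (((m + 2 : ℕ) : ℝ) ^ i / (i.factorial : ℝ)) * (1 / ((m : ℝ) + 2)) ^ i := by
              exact mul_le_mul_of_nonneg_right hch (pow_nonneg hp0 _)
            have h2 : (((m + 2 : ℕ) : ℝ) ^ i / (i.factorial : ℝ)) * (1 / ((m : ℝ) + 2)) ^ i
                = 1 / (i.factorial : ℝ) := by
              push_cast
              rw [div_mul_eq_mul_div, ← mul_pow]
              rw [mul_one_div, div_self (by linarith : (m : ℝ) + 2 ≠ 0)]
              simp
            linarith [h1, h2.le, h2.ge]
          have hchpos : (0 : ℝ) ≤ ((m + 2).choose i : ℝ) * (1 / ((m : ℝ) + 2)) ^ i := by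
            positivity
          calc ((m + 2).choose i : ℝ) * (1 / ((m : ℝ) + 2)) ^ i
                * (1 - 1 / ((m : ℝ) + 2)) ^ (m + 2 - i)
              ≤ ((m + 2).choose i : ℝ) * (1 / ((m : ℝ) + 2)) ^ i * 1 := by
                exact mul_le_mul_of_nonneg_left hpowle hchpos
            _ = ((m + 2).choose i : ℝ) * (1 / ((m : ℝ) + 2)) ^ i := by ring
            _ ≤ 1 / (i.factorial : ℝ) := hmain
        have hfact : (k.factorial : ℝ) * 6 ^ (i - k) ≤ (i.factorial : ℝ) := by
          have := fact6 k hk5 (i - k)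
          rw [show k + (i - k) = i by omega] at this
          exact_mod_cast this
        have htail : 1 / (i.factorial : ℝ) ≤ 1 / (k.factorial : ℝ) * (1 / 6) ^ (i - k) := by
          have heq : 1 / (k.factorial : ℝ) * (1 / 6) ^ (i - k)
              = 1 / ((k.factorial : ℝ) * 6 ^ (i - k)) := by
            rw [one_div_pow, div_mul_div_comm, one_mul]
          rw [heq]
          exact one_div_le_one_div_of_le (by positivity) hfact
        linarith
      · rw [if_neg hcond]
        split_ifs with h
        · positivity
        · exact le_rfl
    have step2 : (∑ i ∈ Finset.range (m + 3),
          (if k ≤ i then 1 / (k.factorial : ℝ) * (1 / 6) ^ (i - k) else 0))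
        = ∑ j ∈ Finset.range (m + 3 - k), 1 / (k.factorial : ℝ) * (1 / 6) ^ j := by
      rw [← Finset.sum_filter]
      have hset : (Finset.range (m + 3)).filter (fun i => k ≤ i) = Finset.Ico k (m + 3) := by
        ext i
        simp only [Finset.mem_filter, Finset.mem_range, Finset.mem_Ico]
        omega
      rw [hset, Finset.sum_Ico_eq_sum_range]
      apply Finset.sum_congr rfl
      intro j _
      rw [Nat.add_sub_cancel_left]
    have step3 : (∑ j ∈ Finset.range (m + 3 - k), 1 / (k.factorial : ℝ) * (1 / 6) ^ j)
        ≤ 1 / (k.factorial : ℝ) * (6 / 5) := by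
      rw [← Finset.mul_sum]
      apply mul_le_mul_of_nonneg_left _ (by positivity)
      rw [geom_sum_eq (by norm_num : (1 / 6 : ℝ) ≠ 1)]
      have h1 : (0 : ℝ) ≤ (1 / 6 : ℝ) ^ (m + 3 - k) := by positivity
      have h2 : ((1 / 6 : ℝ) ^ (m + 3 - k) - 1) / (1 / 6 - 1)
          = (1 - (1 / 6 : ℝ) ^ (m + 3 - k)) * (6 / 5) := by ring
      rw [h2]
      nlinarith
    calc (∑ i ∈ Finset.range (m + 3),
          (if ((m : ℝ) + 2) / 4 ≤ (i : ℝ) then binomialPMF (m + 2) (1 / ((m : ℝ) + 2)) i else 0))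
        ≤ ∑ i ∈ Finset.range (m + 3),
            (if k ≤ i then 1 / (k.factorial : ℝ) * (1 / 6) ^ (i - k) else 0) := step1
      _ = ∑ j ∈ Finset.range (m + 3 - k), 1 / (k.factorial : ℝ) * (1 / 6) ^ j := step2
      _ ≤ 1 / (k.factorial : ℝ) * (6 / 5) := step3
  -- exp bound
  have hR := expbound k hk5
  have hmono : ((m : ℝ) + 2) * Real.log ((m : ℝ) + 2) / 20
      ≤ (4 * k : ℝ) * Real.log (4 * k) / 20 := by
    have h1 : ((m : ℝ) + 2) ≤ (4 * k : ℝ) := by exact_mod_cast hn4k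
    have h2 : Real.log ((m : ℝ) + 2) ≤ Real.log (4 * k) :=
      Real.log_le_log (by linarith) h1
    have h3 : (0 : ℝ) ≤ Real.log ((m : ℝ) + 2) := Real.log_nonneg (by linarith)
    have h4 : ((m : ℝ) + 2) * Real.log ((m : ℝ) + 2) ≤ (4 * k : ℝ) * Real.log (4 * k) := by
      apply mul_le_mul h1 h2 h3 (by positivity)
    linarith
  have hE : Real.exp (((m : ℝ) + 2) * Real.log ((m : ℝ) + 2) / 20)
      < 5 / 6 * (k.factorial : ℝ) :=
    lt_of_le_of_lt (Real.exp_le_exp.mpr hmono) hR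
  have hfirst : (∑ i ∈ Finset.range (m + 3),
        (if ((m : ℝ) + 2) / 4 ≤ (i : ℝ) then binomialPMF (m + 2) (1 / ((m : ℝ) + 2)) i else 0))
      < Real.exp (-(((m : ℝ) + 2) * Real.log ((m : ℝ) + 2)) / 20) := by
    rw [neg_div, Real.exp_neg]
    have hexppos := Real.exp_pos (((m : ℝ) + 2) * Real.log ((m : ℝ) + 2) / 20)
    have h1 : 1 / (k.factorial : ℝ) * (6 / 5)
        < (Real.exp (((m : ℝ) + 2) * Real.log ((m : ℝ) + 2) / 20))⁻¹ := by
      rw [inv_eq_one_div, lt_div_iff₀ hexppos]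
      have : 1 / (k.factorial : ℝ) * (6 / 5) * (5 / 6 * (k.factorial : ℝ)) = 1 := by
        field_simp
      nlinarith [hE, hkfacpos, hexppos]
    linarith
  constructor
  · exact hfirst
  · apply lt_of_lt_of_le hfirst
    apply Real.exp_le_exp.mpr
    have h1 : Real.log (m : ℝ) ≤ Real.log ((m : ℝ) + 2) :=
      Real.log_le_log (by linarith) (by linarith)
    have h2 : (0 : ℝ) ≤ Real.log (m : ℝ) := Real.log_nonneg (by linarith)
    have h3 : (m : ℝ) * Real.log (m : ℝ) ≤ ((m : ℝ) + 2) * Real.log ((m : ℝ) + 2) := by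
      apply mul_le_mul (by linarith) h1 h2 (by linarith)
    rw [neg_div, neg_div, neg_le_neg_iff]
    linarith
end

section
/- Let γ ∈ (0,1) and let T be a real number with T ≥ exp((2/γ)·exp(80/γ)). Set m = ⌈γ·log(T)/2⌉. Then (2^{−m}/8)·min{ exp(m·log(m)/20), T/4 } > T^{1−γ}/32. -/
open Real

/-- Let `γ ∈ (0,1)`, `T ≥ exp((2/γ)·exp(80/γ))`, and `m = ⌈γ·log(T)/2⌉`. Then
`(2^{−m}/8)·min{ exp(m·log(m)/20), T/4 } > T^{1−γ}/32`. -/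
theorem regret_lower_bound_final_step (γ T : ℝ) (hγ : γ ∈ Set.Ioo (0 : ℝ) 1)
    (hT : T ≥ Real.exp ((2 / γ) * Real.exp (80 / γ))) :
    ((2 : ℝ) ^ (-⌈γ * Real.log T / 2⌉) / 8) *
        min (Real.exp ((⌈γ * Real.log T / 2⌉ : ℝ) * Real.log (⌈γ * Real.log T / 2⌉ : ℝ) / 20))
          (T / 4)
      > T ^ (1 - γ) / 32 := by
  obtain ⟨hγ0, hγ1⟩ := hγ
  have hTpos : (0:ℝ) < T := lt_of_lt_of_le (Real.exp_pos _) hT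
  set L := Real.log T with hLdef
  set m : ℤ := ⌈γ * L / 2⌉ with hm
  set M : ℝ := (m : ℝ) with hM
  have hLlarge : (2/γ) * Real.exp (80/γ) ≤ L := by
    have := Real.log_le_log (Real.exp_pos _) hT
    rwa [Real.log_exp] at this
  have he80 : (81:ℝ) ≤ Real.exp (80/γ) := by
    have h80 : (80:ℝ) ≤ 80/γ := by
      rw [le_div_iff₀ hγ0]; nlinarith
    have := Real.add_one_le_exp (80:ℝ)
    have h2 := Real.exp_le_exp.mpr h80
    linarith
  have hγL : 2 * Real.exp (80/γ) ≤ γ * L := by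
    have h := mul_le_mul_of_nonneg_left hLlarge hγ0.le
    have : γ * ((2/γ) * Real.exp (80/γ)) = 2 * Real.exp (80/γ) := by
      field_simp
    linarith
  have hM1 : γ * L / 2 ≤ M := Int.le_ceil _
  have hM2 : M < γ * L / 2 + 1 := Int.ceil_lt_add_one _
  have hMe : Real.exp (80/γ) ≤ M := by linarith
  have hMpos : (0:ℝ) < M := lt_of_lt_of_le (by linarith) hMe
  have hlogM : 80/γ ≤ Real.log M := by
    have := Real.log_le_log (Real.exp_pos _) hMe
    rwa [Real.log_exp] at this
  have hLpos : (0:ℝ) < L := by nlinarith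
  have hT1 : (1:ℝ) ≤ T := by
    have : Real.exp 0 ≤ Real.exp ((2/γ) * Real.exp (80/γ)) := by
      apply Real.exp_le_exp.mpr; positivity
    simpa using le_trans this hT
  -- Step A: min is T/4
  have hA : T / 4 ≤ Real.exp (M * Real.log M / 20) := by
    have h2L : 2 * L ≤ M * Real.log M / 20 := by
      have hml : (γ * L / 2) * (80/γ) ≤ M * Real.log M := by
        apply mul_le_mul hM1 hlogM (by positivity) hMpos.le
      have : (γ * L / 2) * (80/γ) = 40 * L := by field_simp; ring
      linarith
    have : T ≤ Real.exp (2 * L) := by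
      have : Real.exp (2*L) = T * T := by
        rw [two_mul, Real.exp_add, Real.exp_log hTpos]
      nlinarith
    have := le_trans this (Real.exp_le_exp.mpr h2L)
    linarith
  rw [min_eq_right hA]
  -- Step B
  have hlog2 : Real.log 2 < 0.6931471808 := Real.log_two_lt_d9
  have hlog2pos : (0:ℝ) < Real.log 2 := Real.log_pos one_lt_two
  have hkey : M * Real.log 2 < γ * L := by nlinarith
  have h2m : (2:ℝ) ^ m = Real.exp (M * Real.log 2) := by
    rw [← Real.rpow_intCast 2 m, Real.rpow_def_of_pos two_pos, mul_comm]
  have hTg : T ^ (1 - γ) = T / Real.exp (γ * L) := by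
    rw [Real.rpow_sub hTpos, Real.rpow_one, Real.rpow_def_of_pos hTpos, mul_comm]
  rw [hTg, zpow_neg, h2m]
  have hE1 : (0:ℝ) < Real.exp (M * Real.log 2) := Real.exp_pos _
  have hE2 : Real.exp (M * Real.log 2) < Real.exp (γ * L) := Real.exp_lt_exp.mpr hkey
  have heq : (Real.exp (M * Real.log 2))⁻¹ / 8 * (T / 4)
      = T / Real.exp (M * Real.log 2) / 32 := by
    field_simp
    ring
  have hd : T / Real.exp (γ * L) < T / Real.exp (M * Real.log 2) :=
    div_lt_div_of_pos_left hTpos hE1 hE2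
  rw [heq]
  linarith
end
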